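/- Let N ≥ 1 and let Δ be a real number that is not an integer. Let F_N be the N×N unitary DFT matrix and D_N(Δ) the diagonal matrix with entries e^{2πiΔn/N}. Then for all 0 ≤ k, k' ≤ N−1, the (k, k') entry of F_N · D_N(Δ) · F_N^H equals (1/N) · (1 − e^{2πiΔ}) / (1 − e^{2πi(k' − k + Δ)/N}); in particular every entry of F_N · D_N(Δ) · F_N^H is nonzero. -/

import Mathlib

open Matrix Complex

noncomputable section

/-- The `N × N` unitary DFT matrix, with entries
`[F_N]_{k,n} = N^{-1/2} e^{-2πikn/N}`. -/
def dftMatrix (N : ℕ) : Matrix (Fin N) (Fin N) ℂ :=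
  Matrix.of fun k n : Fin N =>
    (Real.sqrt N : ℂ)⁻¹ *
      Complex.exp (-(2 * (Real.pi : ℂ) * Complex.I * (k : ℕ) * (n : ℕ)) / (N : ℕ))

/-- The diagonal matrix `D_N(ε)` with diagonal entries `e^{2πiεn/N}`, `n = 0, …, N-1`. -/
def cfoDiag (N : ℕ) (ε : ℝ) : Matrix (Fin N) (Fin N) ℂ :=
  Matrix.diagonal fun n : Fin N =>
    Complex.exp (2 * (Real.pi : ℂ) * Complex.I * (ε : ℂ) * ((n : ℕ) : ℂ) / (N : ℂ))

/-- For a non-integer `Δ`, the `(k,k')` entry of `F_N · D_N(Δ) · F_Nᴴ` equals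
`(1/N)(1 - e^{2πiΔ})/(1 - e^{2πi(k' - k + Δ)/N})`; in particular every entry is nonzero. -/
theorem stmt5 (N : ℕ) (hN : 1 ≤ N) (Δ : ℝ) (hΔ : ∀ z : ℤ, Δ ≠ (z : ℝ)) (k k' : Fin N) :
    (dftMatrix N * cfoDiag N Δ * (dftMatrix N)ᴴ) k k' =
      (N : ℂ)⁻¹ * (1 - Complex.exp (2 * (Real.pi : ℂ) * Complex.I * (Δ : ℂ))) /
        (1 - Complex.exp (2 * (Real.pi : ℂ) * Complex.I *
          (((k' : ℕ) : ℂ) - ((k : ℕ) : ℂ) + (Δ : ℂ)) / (N : ℂ))) ∧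
    (dftMatrix N * cfoDiag N Δ * (dftMatrix N)ᴴ) k k' ≠ 0 := by
  have hNpos : 0 < N := hN
  have hN0 : (N : ℂ) ≠ 0 := Nat.cast_ne_zero.mpr hNpos.ne'
  have hNR0 : (0:ℝ) ≤ (N:ℝ) := Nat.cast_nonneg N
  set c : ℂ := 2 * (Real.pi : ℂ) * Complex.I with hcdef
  have hc : c ≠ 0 := by
    simp [hcdef, Real.pi_ne_zero, Complex.I_ne_zero, Complex.ofReal_ne_zero]
  set x : ℂ := ((k' : ℕ) : ℂ) - ((k : ℕ) : ℂ) + (Δ : ℂ) with hxdef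
  set r : ℂ := Complex.exp (c * x / (N : ℂ)) with hrdef
  -- r^N = exp(c * Δ)
  have hrpow : r ^ N = Complex.exp (c * (Δ : ℂ)) := by
    rw [hrdef, ← Complex.exp_nat_mul]
    have : (N : ℂ) * (c * x / (N : ℂ)) = c * x := by field_simp
    rw [this, hxdef, mul_add, Complex.exp_add]
    have : c * (((k' : ℕ) : ℂ) - ((k : ℕ) : ℂ)) =
        (((k' : ℤ) - (k : ℤ) : ℤ) : ℂ) * (2 * (Real.pi : ℂ) * Complex.I) := by
      push_cast [hcdef]; ring
    rw [this, Complex.exp_int_mul_two_pi_mul_I, one_mul]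
  -- exp(cΔ) ≠ 1
  have h1 : Complex.exp (c * (Δ : ℂ)) ≠ 1 := by
    intro h
    rw [Complex.exp_eq_one_iff] at h
    obtain ⟨n, hn⟩ := h
    have : (Δ : ℂ) = (n : ℂ) := by
      have h2 : (Δ : ℂ) * c = (n : ℂ) * c := by rw [mul_comm, hn]
      exact mul_right_cancel₀ hc h2
    exact hΔ n (by exact_mod_cast this)
  -- r ≠ 1
  have h2 : r ≠ 1 := by
    intro h
    rw [hrdef, Complex.exp_eq_one_iff] at h
    obtain ⟨n, hn⟩ := h
    rw [div_eq_iff hN0] at hn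
    have h4 : c * x = c * ((n : ℂ) * (N : ℂ)) := by rw [hn]; ring
    have hx : x = (n : ℂ) * (N : ℂ) := mul_left_cancel₀ hc h4
    have : (Δ : ℂ) = ((n * (N:ℤ) - (k' : ℤ) + (k : ℤ) : ℤ) : ℂ) := by
      rw [hxdef] at hx; push_cast at hx ⊢; linear_combination hx
    exact hΔ _ (by exact_mod_cast this)
  have hden : (1 : ℂ) - r ≠ 0 := sub_ne_zero.mpr (Ne.symm h2)
  have hnum : (1 : ℂ) - Complex.exp (c * (Δ : ℂ)) ≠ 0 := sub_ne_zero.mpr (Ne.symm h1)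
  -- entry computation
  have hsqrt : ((Real.sqrt N : ℂ))⁻¹ * ((Real.sqrt N : ℂ))⁻¹ = (N : ℂ)⁻¹ := by
    rw [← mul_inv]
    congr 1
    rw [← Complex.ofReal_mul, Real.mul_self_sqrt hNR0, Complex.ofReal_natCast]
  have hentry : (dftMatrix N * cfoDiag N Δ * (dftMatrix N)ᴴ) k k' =
      ∑ n : Fin N, (N : ℂ)⁻¹ * r ^ (n : ℕ) := by
    rw [Matrix.mul_apply]
    refine Finset.sum_congr rfl fun n _ => ?_
    rw [Matrix.mul_apply]
    rw [Finset.sum_mul]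
    rw [Finset.sum_eq_single n]
    · simp only [dftMatrix, cfoDiag, Matrix.diagonal_apply_eq, Matrix.conjTranspose_apply,
        Matrix.of_apply]
      rw [star_mul', star_inv₀]
      have hstar : star ((Real.sqrt N : ℝ) : ℂ) = ((Real.sqrt N : ℝ) : ℂ) := by
        simp [Complex.star_def, Complex.conj_ofReal]
      rw [hstar, Complex.star_def, ← Complex.exp_conj]
      have hconj : (starRingEnd ℂ) (-(2 * (Real.pi : ℂ) * Complex.I * ((k' : ℕ):ℂ) * ((n : ℕ):ℂ)) / ((N : ℕ):ℂ)) =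
          (2 * (Real.pi : ℂ) * Complex.I * ((k' : ℕ):ℂ) * ((n : ℕ):ℂ)) / ((N : ℕ):ℂ) := by
        simp [map_div₀, Complex.conj_ofReal, map_ofNat]
      rw [hconj]
      rw [← Complex.exp_nat_mul]
      rw [show ((Real.sqrt N : ℝ) : ℂ)⁻¹ * Complex.exp (-(2 * (Real.pi : ℂ) * Complex.I * ((k:ℕ):ℂ) * ((n:ℕ):ℂ)) / ((N:ℕ):ℂ)) *
          Complex.exp (2 * (Real.pi : ℂ) * Complex.I * (Δ:ℂ) * ((n:ℕ):ℂ) / (N:ℂ)) *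
          (((Real.sqrt N : ℝ) : ℂ)⁻¹ * Complex.exp (2 * (Real.pi : ℂ) * Complex.I * ((k':ℕ):ℂ) * ((n:ℕ):ℂ) / ((N:ℕ):ℂ)))
          = (((Real.sqrt N : ℝ) : ℂ)⁻¹ * ((Real.sqrt N : ℝ) : ℂ)⁻¹) *
            (Complex.exp (-(2 * (Real.pi : ℂ) * Complex.I * ((k:ℕ):ℂ) * ((n:ℕ):ℂ)) / ((N:ℕ):ℂ)) *
             Complex.exp (2 * (Real.pi : ℂ) * Complex.I * (Δ:ℂ) * ((n:ℕ):ℂ) / (N:ℂ)) *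
             Complex.exp (2 * (Real.pi : ℂ) * Complex.I * ((k':ℕ):ℂ) * ((n:ℕ):ℂ) / ((N:ℕ):ℂ))) by ring]
      rw [hsqrt, ← Complex.exp_add, ← Complex.exp_add]
      congr 2
      rw [hcdef, hxdef]
      push_cast
      field_simp
      ring
    · intro m _ hm
      simp [cfoDiag, Matrix.diagonal_apply_ne _ hm]
    · intro h; exact absurd (Finset.mem_univ n) h
  rw [hentry]
  rw [← Finset.mul_sum, Fin.sum_univ_eq_sum_range (fun i => r ^ i), geom_sum_eq h2,
    hrpow]
  have hexpr : (N : ℂ)⁻¹ * ((Complex.exp (c * (Δ:ℂ)) - 1) / (r - 1)) =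
      (N : ℂ)⁻¹ * (1 - Complex.exp (c * (Δ:ℂ))) / (1 - r) := by
    rw [mul_div_assoc]
    congr 1
    rw [← neg_div_neg_eq]
    ring_nf
  rw [hexpr]
  constructor
  · rfl
  · exact div_ne_zero (mul_ne_zero (inv_ne_zero hN0) hnum) hden

end
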